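/- For every integer ν ≥ 1, letting S be the set of strictly decreasing (ν+1)-tuples of integers μ = (μ_1, …, μ_{ν+1}) with ν + 2 − i ≤ μ_i ≤ 2ν + 1 − i for each i, one has Σ_{μ ∈ S} 2·Σ_{i=1}^{ν+1} (μ_i − (2ν + 2 − 2i))³ = 2ν²·binom(2ν−1, ν−1). (This evaluates the continuum-Toda coefficient d_{(3)}^{(ν,1)} to be ν·c_ν.) -/

import Mathlib

/-- The set `S` of strictly decreasing `(ν+1)`-tuples of integers
`μ = (μ_1, …, μ_{ν+1})` with `ν + 2 − i ≤ μ_i ≤ 2ν + 1 − i` (1-indexed), i.e.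
`(ν+1, ν, …, 2, 1) ⊆ μ ⊆ (2ν, 2ν−1, …, ν)` componentwise. -/
noncomputable def tupleSet (ν : ℕ) : Finset (Fin (ν + 1) → ℤ) :=
  (Fintype.piFinset fun i : Fin (ν + 1) =>
      Finset.Icc ((ν : ℤ) + 1 - (i : ℕ)) (2 * (ν : ℤ) - (i : ℕ))).filter
    fun μ => ∀ i j : Fin (ν + 1), i < j → μ j < μ i

namespace DCoeffAux

open Finset

/-- Absorption identity over ℤ, valid unconditionally. -/
lemma absorb (n k : ℕ) : ((n:ℤ) - k) * n.choose k = ((k:ℤ)+1) * n.choose (k+1) := by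
  rcases le_or_gt k n with h | h
  · have h1 := Nat.choose_succ_right_eq n k
    have h2 := congrArg (Nat.cast : ℕ → ℤ) h1
    push_cast [h] at h2
    linarith
  · rw [Nat.choose_eq_zero_of_lt h, Nat.choose_eq_zero_of_lt (by omega)]
    simp

/-- Closed form for `4 · Σ_{T ∈ C(range n, k)} Σ_{p∈T} (2|T∩[0,p)| − p)³`. -/
def Q (n k : ℕ) : ℤ :=
  ((k:ℤ)^2*((k:ℤ)-1)^2) * n.choose k
  + ((k:ℤ)*(-3*(k:ℤ)^3+6*(k:ℤ)^2+(k:ℤ)-8)) * n.choose (k+1)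
  + ((k:ℤ)*(3*(k:ℤ)^3+2*(k:ℤ)^2-15*(k:ℤ)-14)) * n.choose (k+2)
  - ((k:ℤ)*((k:ℤ)+1)*((k:ℤ)+2)*((k:ℤ)+3)) * n.choose (k+3)

lemma pascalZ (n j : ℕ) : (((n+1).choose (j+1) : ℕ) : ℤ) = n.choose j + n.choose (j+1) := by
  rw [Nat.choose_succ_succ]; push_cast; ring

lemma Q_zero (n : ℕ) : Q n 0 = 0 := by simp [Q]

lemma Q_rec (n k : ℕ) :
    Q (n+1) (k+1) = Q n (k+1) + Q n k + 4*(2*(k:ℤ) - n)^3 * n.choose k := by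
  have h0 := absorb n k
  have h1 := absorb n (k+1)
  have h2 := absorb n (k+2)
  unfold Q
  rw [show k+1+1 = k+2 from rfl, show k+1+2 = k+3 from rfl, show k+1+3 = k+4 from rfl,
      pascalZ n k, pascalZ n (k+1), pascalZ n (k+2), pascalZ n (k+3)]
  push_cast at h0 h1 h2 ⊢
  linear_combination (28*(k:ℤ)^2 - 20*(n:ℤ)*(k:ℤ) + 4*(n:ℤ)^2) * h0
    + (-16*(k:ℤ)^2 + 4*(n:ℤ)*(k:ℤ) - 12*(k:ℤ) + 4*(n:ℤ) + 4) * h1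
    + (4*(k:ℤ)^2 + 12*(k:ℤ) + 8) * h2

lemma Q_final (ν : ℕ) (hν : 1 ≤ ν) :
    2 * Q (2*ν) (ν+1) = 8 * (ν:ℤ)^2 * ((2*ν-1).choose (ν-1)) := by
  obtain ⟨m, rfl⟩ : ∃ m, ν = m + 1 := ⟨ν - 1, by omega⟩
  have h1 := absorb (2*(m+1)) (m+2)
  have h2 := absorb (2*(m+1)) (m+3)
  have h3 := absorb (2*(m+1)) (m+4)
  have h0 : ((m:ℤ)+2) * (2*(m+1)).choose (m+2) = 2*((m:ℤ)+1) * ((2*(m+1)-1).choose m) := by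
    have e1 := Nat.choose_succ_right_eq (2*(m+1)) (m+1)
    rw [show 2*(m+1) - (m+1) = m+1 from by omega] at e1
    have e2 : (2*(m+1)).choose (m+1) = (2*m+1).choose m + (2*m+1).choose (m+1) := by
      rw [show 2*(m+1) = (2*m+1) + 1 from by omega]
      exact Nat.choose_succ_succ' _ _
    have e3 : (2*m+1).choose (m+1) = (2*m+1).choose m := Nat.choose_symm_half m
    have e4 : 2*(m+1) - 1 = 2*m+1 := by omega
    rw [e4]
    rw [e2, e3] at e1
    rw [show m+1+1 = m+2 from rfl] at e1
    have := congrArg (Nat.cast : ℕ → ℤ) e1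
    push_cast at this
    linarith
  rw [show m+1-1 = m from by omega]
  unfold Q
  rw [show m+1+1 = m+2 from rfl, show m+2+1 = m+3 from rfl, show m+2+2 = m+4 from rfl,
      show m+2+3 = m+5 from rfl] at *
  push_cast at h0 h1 h2 h3 ⊢
  linear_combination (4*((m:ℤ)+1)) * h0
    + (2*((m:ℤ)+1)^3 + 6*((m:ℤ)+1)^2 + 4*((m:ℤ)+1)) * h1
    + (-4*((m:ℤ)+1)^3 - 10*((m:ℤ)+1)^2 - 2*((m:ℤ)+1) + 4) * h2
    + (2*((m:ℤ)+1)^3 + 12*((m:ℤ)+1)^2 + 22*((m:ℤ)+1) + 12) * h3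

/-- The combinatorial sum: over `k`-subsets `T` of `range n`, and `p ∈ T`,
of `(2|T ∩ [0,p)| − p)³`. -/
def gsum (n k : ℕ) : ℤ :=
  ∑ T ∈ powersetCard k (range n), ∑ p ∈ T, (2*(((T.filter (· < p)).card : ℤ)) - p)^3

lemma gsum_zero (n : ℕ) : gsum n 0 = 0 := by
  simp [gsum]

lemma gsum_rec (n k : ℕ) :
    gsum (n+1) (k+1) = gsum n (k+1) + gsum n k + (2*(k:ℤ) - n)^3 * n.choose k := by
  unfold gsum
  rw [range_add_one, powersetCard_succ_insert notMem_range_self]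
  have hdisj : Disjoint (powersetCard (k+1) (range n))
      ((powersetCard k (range n)).image (insert n)) := by
    rw [disjoint_left]
    intro T hT hT'
    simp only [mem_image] at hT'
    obtain ⟨T', hT', rfl⟩ := hT'
    have h1 : insert n T' ⊆ range n := (mem_powersetCard.mp hT).1
    have := h1 (mem_insert_self n T')
    exact absurd this notMem_range_self
  rw [sum_union hdisj]
  have hinj : ∀ T ∈ powersetCard k (range n), ∀ T' ∈ powersetCard k (range n),
      insert n T = insert n T' → T = T' := by
    intro T hT T' hT' h
    have h1 : T ⊆ range n := (mem_powersetCard.mp hT).1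
    have h2 : T' ⊆ range n := (mem_powersetCard.mp hT').1
    have hn1 : n ∉ T := fun hc => notMem_range_self (h1 hc)
    have hn2 : n ∉ T' := fun hc => notMem_range_self (h2 hc)
    ext a
    constructor
    · intro ha
      have : a ∈ insert n T' := h ▸ mem_insert_of_mem ha
      rcases mem_insert.mp this with rfl | h'
      · exact absurd ha hn1
      · exact h'
    · intro ha
      have : a ∈ insert n T := h.symm ▸ mem_insert_of_mem ha
      rcases mem_insert.mp this with rfl | h'
      · exact absurd ha hn2
      · exact h'
  rw [sum_image hinj]
  have key : ∀ T ∈ powersetCard k (range n),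
      (∑ p ∈ insert n T, (2*((((insert n T).filter (· < p)).card : ℤ)) - p)^3)
        = (∑ p ∈ T, (2*(((T.filter (· < p)).card : ℤ)) - p)^3) + (2*(k:ℤ) - n)^3 := by
    intro T hT
    obtain ⟨hsub, hcard⟩ := mem_powersetCard.mp hT
    have hn : n ∉ T := fun hc => notMem_range_self (hsub hc)
    have hlt : ∀ a ∈ T, a < n := fun a ha => mem_range.mp (hsub ha)
    rw [sum_insert hn]
    have e1 : (insert n T).filter (· < n) = T := by
      ext a
      simp only [mem_filter, mem_insert]
      constructor
      · rintro ⟨rfl | ha, hlt'⟩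
        · omega
        · exact ha
      · intro ha
        exact ⟨Or.inr ha, hlt a ha⟩
    have e2 : ∀ p ∈ T, (insert n T).filter (· < p) = T.filter (· < p) := by
      intro p hp
      ext a
      simp only [mem_filter, mem_insert]
      constructor
      · rintro ⟨rfl | ha, hlt'⟩
        · exact absurd hlt' (by have := hlt p hp; omega)
        · exact ⟨ha, hlt'⟩
      · rintro ⟨ha, hlt'⟩
        exact ⟨Or.inr ha, hlt'⟩
    rw [e1, hcard]
    rw [add_comm]
    congr 1
    exact sum_congr rfl fun p hp => by rw [e2 p hp]
  rw [sum_congr rfl key, sum_add_distrib, sum_const, card_powersetCard, card_range,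
    nsmul_eq_mul]
  ring

lemma four_gsum : ∀ n k : ℕ, 4 * gsum n k = Q n k := by
  intro n
  induction n with
  | zero =>
    intro k
    match k with
    | 0 => rw [gsum_zero, Q_zero]; ring
    | k+1 =>
      have h1 : gsum 0 (k+1) = 0 := by
        unfold gsum
        rw [Finset.powersetCard_eq_empty.mpr (by simp)]
        simp
      have h2 : Q 0 (k+1) = 0 := by
        unfold Q
        rw [Nat.choose_eq_zero_of_lt (by omega), Nat.choose_eq_zero_of_lt (by omega),
            Nat.choose_eq_zero_of_lt (by omega), Nat.choose_eq_zero_of_lt (by omega)]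
        push_cast
        ring
      rw [h1, h2]; ring
  | succ n ih =>
    intro k
    match k with
    | 0 => rw [gsum_zero, Q_zero]; ring
    | k+1 =>
      rw [gsum_rec, Q_rec, ← ih (k+1), ← ih k]
      ring

lemma smono_gap {m : ℕ} {f : Fin m → ℕ} (hf : StrictMono f) :
    ∀ (d : ℕ) (i j : Fin m), (j:ℕ) = (i:ℕ) + d → f i + d ≤ f j := by
  intro d
  induction d with
  | zero =>
    intro i j h
    have hij : i = j := Fin.ext (by omega)
    subst hij
    omega
  | succ d ih =>
    intro i j h
    have hj : (j:ℕ) - 1 < m := by omega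
    have h1 : f ⟨(j:ℕ) - 1, hj⟩ < f j := hf (by rw [Fin.lt_def]; simp; omega)
    have h2 := ih i ⟨(j:ℕ) - 1, hj⟩ (by simp; omega)
    omega

lemma mem_tupleSet {ν : ℕ} {μ : Fin (ν+1) → ℤ} :
    μ ∈ tupleSet ν ↔
      (∀ i : Fin (ν+1), (ν:ℤ) + 1 - (i:ℕ) ≤ μ i ∧ μ i ≤ 2*(ν:ℤ) - (i:ℕ)) ∧
      (∀ i j : Fin (ν+1), i < j → μ j < μ i) := by
  simp [tupleSet, Fintype.mem_piFinset, mem_Icc]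

def qmap (ν : ℕ) (μ : Fin (ν+1) → ℤ) : Fin (ν+1) → ℕ :=
  fun i => (2*(ν:ℤ) - μ i).toNat

lemma qmap_val {ν : ℕ} {μ : Fin (ν+1) → ℤ} (hμ : μ ∈ tupleSet ν) (i : Fin (ν+1)) :
    ((qmap ν μ i : ℕ) : ℤ) = 2*(ν:ℤ) - μ i := by
  obtain ⟨hbnd, _⟩ := mem_tupleSet.mp hμ
  have h2 := (hbnd i).2
  have h3 := i.isLt
  exact Int.toNat_of_nonneg (by omega)

lemma qmap_mono {ν : ℕ} {μ : Fin (ν+1) → ℤ} (hμ : μ ∈ tupleSet ν) :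
    StrictMono (qmap ν μ) := by
  obtain ⟨_, hdec⟩ := mem_tupleSet.mp hμ
  intro i j hij
  have := hdec i j hij
  have h1 := qmap_val hμ i
  have h2 := qmap_val hμ j
  omega

lemma qmap_image_mem {ν : ℕ} {μ : Fin (ν+1) → ℤ} (hμ : μ ∈ tupleSet ν) :
    Finset.image (qmap ν μ) univ ∈ powersetCard (ν+1) (range (2*ν)) := by
  obtain ⟨hbnd, _⟩ := mem_tupleSet.mp hμ
  rw [mem_powersetCard]
  constructor
  · intro a ha
    obtain ⟨i, _, rfl⟩ := mem_image.mp ha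
    rw [mem_range]
    have h1 := qmap_val hμ i
    have h2 := (hbnd i).1
    have h3 := i.isLt
    have h4 : ((qmap ν μ i : ℕ) : ℤ) < 2*(ν:ℤ) := by omega
    exact_mod_cast h4
  · rw [card_image_of_injective _ (qmap_mono hμ).injective, card_univ, Fintype.card_fin]

lemma card_filter_lt_fin {m : ℕ} (i : Fin m) :
    (univ.filter (fun j => j < i)).card = (i : ℕ) := by
  have : univ.filter (fun j => j < i) = Iio i := by
    ext a; simp
  rw [this, Fin.card_Iio]

lemma tuple_sum (ν : ℕ) :
    ∑ μ ∈ tupleSet ν, ∑ i : Fin (ν+1), (μ i - (2*(ν:ℤ) - 2*((i:ℕ):ℤ)))^3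
      = gsum (2*ν) (ν+1) := by
  unfold gsum
  refine sum_bij (fun μ _ => Finset.image (qmap ν μ) univ)
    (fun μ hμ => qmap_image_mem hμ) ?_ ?_ ?_
  · -- injective
    intro μ hμ μ' hμ' h
    have h'' : Finset.image (qmap ν μ) univ = Finset.image (qmap ν μ') univ := h
    set T := Finset.image (qmap ν μ) univ with hT
    have hcard : T.card = ν + 1 := by
      rw [hT, card_image_of_injective _ (qmap_mono hμ).injective, card_univ, Fintype.card_fin]
    have e1 : qmap ν μ = T.orderEmbOfFin hcard :=
      orderEmbOfFin_unique hcard (fun x => mem_image_of_mem _ (mem_univ x)) (qmap_mono hμ)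
    have e2 : qmap ν μ' = T.orderEmbOfFin hcard :=
      orderEmbOfFin_unique hcard
        (fun x => by rw [h'']; exact mem_image_of_mem _ (mem_univ x)) (qmap_mono hμ')
    funext i
    have v1 := qmap_val hμ i
    have v2 := qmap_val hμ' i
    rw [e1] at v1
    rw [e2] at v2
    omega
  · -- surjective
    intro T hT
    obtain ⟨hsub, hcard⟩ := mem_powersetCard.mp hT
    set f := T.orderEmbOfFin hcard with hf
    have hfmono : StrictMono f := (T.orderEmbOfFin hcard).strictMono
    have hmem : ∀ j : Fin (ν+1), (f j : ℕ) ∈ T := fun j => T.orderEmbOfFin_mem hcard j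
    have hfrange : ∀ j : Fin (ν+1), (f j : ℕ) < 2*ν := fun j => mem_range.mp (hsub (hmem j))
    have hlow : ∀ i : Fin (ν+1), (i:ℕ) ≤ f i := by
      intro i
      have := smono_gap hfmono (i:ℕ) ⟨0, by omega⟩ i (by simp)
      omega
    have hhigh : ∀ i : Fin (ν+1), f i + (ν - (i:ℕ)) ≤ 2*ν - 1 := by
      intro i
      have hi := i.isLt
      have h1 := smono_gap hfmono (ν - (i:ℕ)) i ⟨ν, by omega⟩ (by simp; omega)
      have h3 := hfrange ⟨ν, by omega⟩
      omega
    refine ⟨fun i => 2*(ν:ℤ) - f i, ?_, ?_⟩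
    · rw [mem_tupleSet]
      constructor
      · intro i
        have hi := i.isLt
        have h1 := hlow i
        have h2 := hhigh i
        have h3 := hfrange i
        constructor
        · show (ν:ℤ) + 1 - (i:ℕ) ≤ 2*(ν:ℤ) - ((f i : ℕ) : ℤ)
          omega
        · show 2*(ν:ℤ) - ((f i : ℕ) : ℤ) ≤ 2*(ν:ℤ) - ((i:ℕ) : ℤ)
          omega
      · intro i j hij
        have h5 := hfmono hij
        show 2*(ν:ℤ) - ((f j : ℕ) : ℤ) < 2*(ν:ℤ) - ((f i : ℕ) : ℤ)
        omega
    · -- image equality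
      have hq : qmap ν (fun i => 2*(ν:ℤ) - f i) = f := by
        funext i
        simp [qmap]
      show Finset.image (qmap ν (fun i => 2*(ν:ℤ) - f i)) univ = T
      rw [hq]
      ext a
      simp only [mem_image, mem_univ, true_and]
      constructor
      · rintro ⟨i, rfl⟩
        exact hmem i
      · intro ha
        have hr := T.range_orderEmbOfFin hcard
        have : a ∈ Set.range f := by rw [hf, hr]; exact ha
        obtain ⟨i, hi⟩ := this
        exact ⟨i, hi⟩
  · -- sums agree
    intro μ hμ
    have hmono := qmap_mono hμ
    rw [sum_image (fun i _ j _ h => hmono.injective h)]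
    refine sum_congr rfl fun i _ => ?_
    have hfilter : (Finset.image (qmap ν μ) univ).filter (· < qmap ν μ i)
        = Finset.image (qmap ν μ) (univ.filter (fun j => j < i)) := by
      ext a
      simp only [mem_filter, mem_image, mem_univ, true_and]
      constructor
      · rintro ⟨⟨j, rfl⟩, hlt⟩
        exact ⟨j, hmono.lt_iff_lt.mp hlt, rfl⟩
      · rintro ⟨j, hj, rfl⟩
        exact ⟨⟨j, rfl⟩, hmono hj⟩
    rw [hfilter, card_image_of_injective _ hmono.injective, card_filter_lt_fin]
    have hv := qmap_val hμ i
    have : μ i - (2*(ν:ℤ) - 2*((i:ℕ):ℤ)) = 2*((i:ℕ):ℤ) - ((qmap ν μ i : ℕ) : ℤ) := by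
      omega
    rw [this]

end DCoeffAux

/-- For every `ν ≥ 1`, with `η_i = 2ν + 2 − 2i` (1-indexed),
`Σ_{μ ∈ S} 2·Σ_{i=1}^{ν+1} (μ_i − η_i)³ = 2ν²·binom(2ν−1, ν−1)`; this evaluates
the continuum-Toda coefficient `d_{(3)}^{(ν,1)}` to `ν·c_ν`. -/
theorem d_coefficient_partition_three
    (ν : ℕ) (hν : 1 ≤ ν) :
    ∑ μ ∈ tupleSet ν,
        2 * ∑ i : Fin (ν + 1), (μ i - (2 * (ν : ℤ) - 2 * ((i : ℕ) : ℤ))) ^ 3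
      = 2 * (ν : ℤ) ^ 2 * (Nat.choose (2 * ν - 1) (ν - 1) : ℤ) := by
  have h1 : ∑ μ ∈ tupleSet ν,
      2 * ∑ i : Fin (ν + 1), (μ i - (2 * (ν : ℤ) - 2 * ((i : ℕ) : ℤ))) ^ 3
      = 2 * ∑ μ ∈ tupleSet ν,
        ∑ i : Fin (ν + 1), (μ i - (2 * (ν : ℤ) - 2 * ((i : ℕ) : ℤ))) ^ 3 :=
    (Finset.mul_sum _ _ _).symm
  rw [h1, DCoeffAux.tuple_sum ν]
  have key : (4:ℤ) * (2 * DCoeffAux.gsum (2*ν) (ν+1))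
      = 4 * (2 * (ν : ℤ) ^ 2 * (Nat.choose (2 * ν - 1) (ν - 1) : ℤ)) := by
    have h2 := DCoeffAux.four_gsum (2*ν) (ν+1)
    have h3 := DCoeffAux.Q_final ν hν
    calc (4:ℤ) * (2 * DCoeffAux.gsum (2*ν) (ν+1))
        = 2 * (4 * DCoeffAux.gsum (2*ν) (ν+1)) := by ring
      _ = 2 * DCoeffAux.Q (2*ν) (ν+1) := by rw [h2]
      _ = 8 * (ν:ℤ)^2 * ((2*ν-1).choose (ν-1)) := h3
      _ = 4 * (2 * (ν : ℤ) ^ 2 * (Nat.choose (2 * ν - 1) (ν - 1) : ℤ)) := by ring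
  exact mul_left_cancel₀ (by norm_num) key
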